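/- arXiv:2601.18575 — 6 statements merged into one kernel-verified Lean document; each statement's English description precedes it below -/
import Mathlib

section
/- Let n ≥ 1, let v : ℝ → ℝⁿ → ℝⁿ be bounded and twice continuously differentiable jointly in (t, x), and let X : ℝ → ℝⁿ → ℝⁿ be a flow of v that is twice continuously differentiable jointly in (t, x). Then for every x ∈ ℝⁿ the map t ↦ det(D_x X(t, x)) (the determinant of the Fréchet derivative of X(t, ·) at x) is differentiable in t, and for all t ∈ ℝ, x ∈ ℝⁿ: ∂/∂t det(D_x X(t, x)) = det(D_x X(t, x)) · (∇·v_t)(X(t, x)). -/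
open MeasureTheory

/-- The determinant, as a continuous multilinear map in the rows. -/
noncomputable def detCM (n : ℕ) : ContinuousMultilinearMap ℝ (fun _ : Fin n => (Fin n → ℝ)) ℝ :=
  MultilinearMap.mkContinuous Matrix.detRowAlternating.toMultilinearMap (n.factorial : ℝ) <| by
    intro m
    have hdet : (Matrix.detRowAlternating.toMultilinearMap : MultilinearMap ℝ _ ℝ) m
        = Matrix.det (Matrix.of m) := rfl
    rw [hdet, Matrix.det_apply]
    calc ‖∑ σ : Equiv.Perm (Fin n), Equiv.Perm.sign σ • ∏ i, Matrix.of m (σ i) i‖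
        ≤ ∑ σ : Equiv.Perm (Fin n), ‖Equiv.Perm.sign σ • ∏ i, Matrix.of m (σ i) i‖ :=
          norm_sum_le _ _
      _ ≤ ∑ _σ : Equiv.Perm (Fin n), ∏ i, ‖m i‖ := by
          apply Finset.sum_le_sum
          intro σ _
          have h1 : ‖Equiv.Perm.sign σ • ∏ i, Matrix.of m (σ i) i‖
              = ‖∏ i, Matrix.of m (σ i) i‖ := by
            rcases Int.units_eq_one_or (Equiv.Perm.sign σ) with h | h <;>
              simp [h, Units.smul_def]
          rw [h1]
          calc ‖∏ i, Matrix.of m (σ i) i‖ ≤ ∏ i, ‖m (σ i)‖ := by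
                rw [Real.norm_eq_abs, Finset.abs_prod]
                exact Finset.prod_le_prod (fun _ _ => abs_nonneg _)
                  (fun i _ => norm_le_pi_norm (m (σ i)) i)
            _ = ∏ i, ‖m i‖ := Equiv.prod_comp σ (fun i => ‖m i‖)
      _ = (n.factorial : ℝ) * ∏ i, ‖m i‖ := by
          rw [Finset.sum_const, nsmul_eq_mul, Finset.card_univ, Fintype.card_perm,
            Fintype.card_fin]

@[simp] lemma detCM_apply (n : ℕ) (m : Fin n → Fin n → ℝ) :
    detCM n m = Matrix.det (Matrix.of m) := rfl

/-- The matrix entries of a continuous linear endomorphism of Euclidean space, as a linear map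
into `Fin n → Fin n → ℝ`. -/
noncomputable def clmEntries {n : ℕ} :
    (EuclideanSpace ℝ (Fin n) →L[ℝ] EuclideanSpace ℝ (Fin n)) →ₗ[ℝ] (Fin n → Fin n → ℝ) where
  toFun T := fun i j => LinearMap.toMatrix (EuclideanSpace.basisFun (Fin n) ℝ).toBasis
      (EuclideanSpace.basisFun (Fin n) ℝ).toBasis (T : _ →ₗ[ℝ] _) i j
  map_add' T S := by
    funext i j
    simp [Matrix.add_apply]
  map_smul' c T := by
    funext i j
    simp [Matrix.smul_apply]

/-- Jacobi's formula, in the form needed here: if a path of continuous linear endomorphisms has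
derivative `B ∘ A t` at `t`, then the determinant has derivative `det (A t) * trace B`. -/
lemma hasDerivAt_det_of_hasDerivAt {n : ℕ}
    {A : ℝ → (EuclideanSpace ℝ (Fin n) →L[ℝ] EuclideanSpace ℝ (Fin n))}
    {B : EuclideanSpace ℝ (Fin n) →L[ℝ] EuclideanSpace ℝ (Fin n)} {t : ℝ}
    (h : HasDerivAt A (B.comp (A t)) t) :
    HasDerivAt (fun s => LinearMap.det (A s).toLinearMap)
      (LinearMap.det (A t).toLinearMap *
        LinearMap.trace ℝ (EuclideanSpace ℝ (Fin n)) B.toLinearMap) t := by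
  classical
  set b := (EuclideanSpace.basisFun (Fin n) ℝ).toBasis with hb
  have hM : HasDerivAt (fun s => clmEntries (A s)) (clmEntries (B.comp (A t))) t := by
    have := ((LinearMap.toContinuousLinearMap (clmEntries (n := n))).hasFDerivAt
      (x := A t)).comp_hasDerivAt t h
    exact this
  have hdet : HasDerivAt (fun s => detCM n (clmEntries (A s)))
      ((detCM n).linearDeriv (clmEntries (A t)) (clmEntries (B.comp (A t)))) t :=
    ((detCM n).hasFDerivAt (clmEntries (A t))).comp_hasDerivAt t hM
  set MA : Matrix (Fin n) (Fin n) ℝ := LinearMap.toMatrix b b (A t).toLinearMap with hMA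
  set MB : Matrix (Fin n) (Fin n) ℝ := LinearMap.toMatrix b b B.toLinearMap with hMB
  have hfun : (fun s => detCM n (clmEntries (A s)))
      = fun s => LinearMap.det (A s).toLinearMap := by
    funext s
    rw [detCM_apply]
    have : Matrix.of (clmEntries (A s)) = LinearMap.toMatrix b b (A s).toLinearMap := rfl
    rw [this, LinearMap.det_toMatrix]
  have hcomp : Matrix.of (clmEntries (B.comp (A t))) = MB * MA := by
    show LinearMap.toMatrix b b ((B.comp (A t) : _ →L[ℝ] _) : _ →ₗ[ℝ] _) = MB * MA
    rw [ContinuousLinearMap.toLinearMap_comp, LinearMap.toMatrix_comp b b b]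
  have hval : (detCM n).linearDeriv (clmEntries (A t)) (clmEntries (B.comp (A t)))
      = LinearMap.det (A t).toLinearMap *
        LinearMap.trace ℝ (EuclideanSpace ℝ (Fin n)) B.toLinearMap := by
    rw [ContinuousMultilinearMap.linearDeriv_apply]
    have hterm : ∀ i : Fin n,
        detCM n (Function.update (clmEntries (A t)) i (clmEntries (B.comp (A t)) i))
        = MB i i * MA.det := by
      intro i
      rw [detCM_apply]
      have h1 : Matrix.of (Function.update (clmEntries (A t)) i (clmEntries (B.comp (A t)) i))
          = MA.updateRow i ((MB * MA) i) := by
        rw [Matrix.updateRow]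
        congr 1
        · exact congrArg _ (congrFun hcomp i)
      have h2 : (MB * MA) i = ∑ k, MB i k • MA k := by
        funext j
        simp [Matrix.mul_apply, Finset.sum_apply]
      rw [h1, h2, Matrix.det_updateRow_sum]
      rfl
    rw [Finset.sum_congr rfl (fun i _ => hterm i), ← Finset.sum_mul]
    rw [← LinearMap.det_toMatrix b, LinearMap.trace_eq_matrix_trace ℝ b]
    rw [mul_comm]
    rfl
  rw [← hfun, ← hval]
  exact hdet

open ContinuousLinearMap in
/-- The derivative in time of the spatial Fréchet derivative of a flow. -/
lemma flow_fderiv_hasDerivAt {n : ℕ}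
    (F Vj : ℝ × EuclideanSpace ℝ (Fin n) → EuclideanSpace ℝ (Fin n))
    (hF : ContDiff ℝ 2 F) (hV : ContDiff ℝ 2 Vj)
    (hflow : ∀ (s : ℝ) (y : EuclideanSpace ℝ (Fin n)),
      HasDerivAt (fun r => F (r, y)) (Vj (s, F (s, y))) s)
    (t : ℝ) (x : EuclideanSpace ℝ (Fin n)) :
    HasDerivAt (fun s => fderiv ℝ (fun y => F (s, y)) x)
      ((fderiv ℝ (fun y => Vj (t, y)) (F (t, x))).comp
        (fderiv ℝ (fun y => F (t, y)) x)) t := by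
  have hFd : Differentiable ℝ F := hF.differentiable two_ne_zero
  have hDF : Differentiable ℝ (fderiv ℝ F) :=
    (hF.fderiv_right (m := 1) (by norm_num)).differentiable one_ne_zero
  have hVd : Differentiable ℝ Vj := hV.differentiable two_ne_zero
  have claim1 : ∀ s y, HasFDerivAt (fun y' => F (s, y'))
      ((fderiv ℝ F (s, y)).comp (inr ℝ ℝ _)) y := by
    intro s y
    exact (hFd (s, y)).hasFDerivAt.comp y (hasFDerivAt_prodMk_right s y)
  have claimA : ∀ s, fderiv ℝ (fun y => F (s, y)) x
      = (fderiv ℝ F (s, x)).comp (inr ℝ ℝ _) := fun s => (claim1 s x).fderiv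
  have claim2 : ∀ p : ℝ × EuclideanSpace ℝ (Fin n), fderiv ℝ F p (1, 0) = Vj (p.1, F p) := by
    rintro ⟨s, y⟩
    have hc : HasDerivAt (fun r : ℝ => (r, y)) ((1 : ℝ), (0 : EuclideanSpace ℝ (Fin n))) s :=
      (hasDerivAt_id s).prodMk (hasDerivAt_const s y)
    have h1 : HasDerivAt (fun r => F (r, y)) (fderiv ℝ F (s, y) (1, 0)) s :=
      (hFd (s, y)).hasFDerivAt.comp_hasDerivAt s hc
    exact h1.unique (hflow s y)
  have hW : HasFDerivAt (fderiv ℝ F) (fderiv ℝ (fderiv ℝ F) (t, x)) (t, x) :=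
    (hDF (t, x)).hasFDerivAt
  set W := fderiv ℝ (fderiv ℝ F) (t, x) with hWdef
  have hsymm : ∀ u w : ℝ × EuclideanSpace ℝ (Fin n), W u w = W w u :=
    second_derivative_symmetric (fun y => (hFd y).hasFDerivAt) hW
  have hAt : HasDerivAt (fun s => fderiv ℝ F (s, x)) (W (1, 0)) t :=
    hW.comp_hasDerivAt t ((hasDerivAt_id t).prodMk (hasDerivAt_const t x))
  have hA : HasDerivAt (fun s => fderiv ℝ (fun y => F (s, y)) x)
      ((W (1, 0)).comp (inr ℝ ℝ _)) t := by
    have h2 := (((compL ℝ (EuclideanSpace ℝ (Fin n)) (ℝ × EuclideanSpace ℝ (Fin n))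
        (EuclideanSpace ℝ (Fin n))).flip (inr ℝ ℝ _)).hasFDerivAt
      (x := fderiv ℝ F (t, x))).comp_hasDerivAt t hAt
    have hfun : (fun s => fderiv ℝ (fun y => F (s, y)) x)
        = fun s => (compL ℝ (EuclideanSpace ℝ (Fin n)) (ℝ × EuclideanSpace ℝ (Fin n))
            (EuclideanSpace ℝ (Fin n))).flip (inr ℝ ℝ _) (fderiv ℝ F (s, x)) := by
      funext s; rw [claimA s]; rfl
    rw [hfun]
    exact h2
  have hkey : (W (1, 0)).comp (inr ℝ ℝ _)
      = (fderiv ℝ (fun y => Vj (t, y)) (F (t, x))).comp (fderiv ℝ (fun y => F (t, y)) x) := by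
    have hG1 : HasFDerivAt (fun q => fderiv ℝ F q ((1 : ℝ), (0 : EuclideanSpace ℝ (Fin n))))
        ((ContinuousLinearMap.apply ℝ (EuclideanSpace ℝ (Fin n))
          ((1 : ℝ), (0 : EuclideanSpace ℝ (Fin n)))).comp W) (t, x) :=
      (ContinuousLinearMap.apply ℝ (EuclideanSpace ℝ (Fin n))
        ((1 : ℝ), (0 : EuclideanSpace ℝ (Fin n)))).hasFDerivAt.comp (t, x) hW
    have hG2 : (fun q : ℝ × EuclideanSpace ℝ (Fin n) =>
        fderiv ℝ F q ((1 : ℝ), (0 : EuclideanSpace ℝ (Fin n))))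
        = fun q => Vj (q.1, F q) := by
      funext q; exact claim2 q
    have hG3 : HasFDerivAt (fun q : ℝ × EuclideanSpace ℝ (Fin n) => Vj (q.1, F q))
        ((fderiv ℝ Vj (t, F (t, x))).comp
          ((fst ℝ ℝ (EuclideanSpace ℝ (Fin n))).prod (fderiv ℝ F (t, x)))) (t, x) :=
      (hVd (t, F (t, x))).hasFDerivAt.comp (t, x)
        ((hasFDerivAt_fst).prodMk (hFd (t, x)).hasFDerivAt)
    rw [hG2] at hG1
    have huniq := hG1.unique hG3
    have hB : fderiv ℝ (fun y => Vj (t, y)) (F (t, x))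
        = (fderiv ℝ Vj (t, F (t, x))).comp (inr ℝ ℝ _) :=
      ((hVd (t, F (t, x))).hasFDerivAt.comp (F (t, x))
        (hasFDerivAt_prodMk_right t (F (t, x)))).fderiv
    apply ContinuousLinearMap.ext
    intro h
    calc (W (1, 0)).comp (inr ℝ ℝ _) h
        = W ((0 : ℝ), h) (1, 0) := hsymm _ _
      _ = ((ContinuousLinearMap.apply ℝ (EuclideanSpace ℝ (Fin n))
            ((1 : ℝ), (0 : EuclideanSpace ℝ (Fin n)))).comp W) ((0 : ℝ), h) := rfl
      _ = ((fderiv ℝ Vj (t, F (t, x))).comp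
            ((fst ℝ ℝ (EuclideanSpace ℝ (Fin n))).prod (fderiv ℝ F (t, x)))) ((0 : ℝ), h) := by
          rw [huniq]
      _ = (fderiv ℝ (fun y => Vj (t, y)) (F (t, x))).comp
            (fderiv ℝ (fun y => F (t, y)) x) h := by
          rw [hB, claimA t]
          rfl
  rw [← hkey]
  exact hA

/-- The divergence of a vector field `w` at `y`: the trace of its Fréchet derivative at `y`. -/
noncomputable def divg {n : ℕ}
    (w : EuclideanSpace ℝ (Fin n) → EuclideanSpace ℝ (Fin n))
    (y : EuclideanSpace ℝ (Fin n)) : ℝ :=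
  LinearMap.trace ℝ (EuclideanSpace ℝ (Fin n)) (fderiv ℝ w y).toLinearMap

theorem det_fderiv_flow_hasDerivAt
    (n : ℕ) (hn : 1 ≤ n)
    (v X : ℝ → EuclideanSpace ℝ (Fin n) → EuclideanSpace ℝ (Fin n))
    (hv_bdd : ∃ C : ℝ, ∀ t x, ‖v t x‖ ≤ C)
    (hv_smooth : ContDiff ℝ 2 (fun q : ℝ × EuclideanSpace ℝ (Fin n) => v q.1 q.2))
    (hX_smooth : ContDiff ℝ 2 (fun q : ℝ × EuclideanSpace ℝ (Fin n) => X q.1 q.2))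
    (hX0 : ∀ x, X 0 x = x)
    (hflow : ∀ t x, HasDerivAt (fun s => X s x) (v t (X t x)) t) :
    ∀ (t : ℝ) (x : EuclideanSpace ℝ (Fin n)),
      HasDerivAt (fun s => LinearMap.det (fderiv ℝ (X s) x).toLinearMap)
        (LinearMap.det (fderiv ℝ (X t) x).toLinearMap * divg (v t) (X t x)) t := by
  intro t x
  have hA : HasDerivAt (fun s => fderiv ℝ (X s) x)
      ((fderiv ℝ (v t) (X t x)).comp (fderiv ℝ (X t) x)) t :=
    flow_fderiv_hasDerivAt (fun q => X q.1 q.2) (fun q => v q.1 q.2)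
      hX_smooth hv_smooth (fun s y => hflow s y) t x
  exact hasDerivAt_det_of_hasDerivAt hA
end

section
/- Let n ≥ 1, let v : ℝ → ℝⁿ → ℝⁿ be bounded and twice continuously differentiable jointly in (t, x), and let X : ℝ → ℝⁿ → ℝⁿ be a flow of v that is twice continuously differentiable jointly in (t, x). Then for all t ∈ ℝ and x ∈ ℝⁿ: det(D_x X(t, x)) = exp(∫₀ᵗ (∇·v_s)(X(s, x)) ds). -/
open MeasureTheory

open Matrix Finset

lemma hasDerivAt_det' {n : ℕ} (M : ℝ → Matrix (Fin n) (Fin n) ℝ)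
    (N : Matrix (Fin n) (Fin n) ℝ) (t : ℝ)
    (h : ∀ a b, HasDerivAt (fun s => M s a b) (N a b) t) :
    HasDerivAt (fun s => (M s).det)
      (∑ j, (Matrix.updateCol (M t) j (fun a => N a j)).det) t := by
  simp only [Matrix.det_apply']
  have key : ∀ σ : Equiv.Perm (Fin n),
      HasDerivAt (fun s => ((Equiv.Perm.sign σ : ℤ) : ℝ) * ∏ i, M s (σ i) i)
        (((Equiv.Perm.sign σ : ℤ) : ℝ) *
          ∑ j, (∏ i ∈ Finset.univ.erase j, M t (σ i) i) • N (σ j) j) t :=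
    fun σ => (HasDerivAt.fun_finsetProd (fun j _ => h (σ j) j)).const_mul _
  have H := HasDerivAt.fun_sum (fun σ (_ : σ ∈ Finset.univ) => key σ)
  refine H.congr_deriv (Eq.symm ?_)
  rw [Finset.sum_comm]
  refine Finset.sum_congr rfl (fun σ _ => ?_)
  rw [Finset.mul_sum]
  refine Finset.sum_congr rfl (fun j _ => ?_)
  have : ∀ i, (M t).updateCol j (fun a => N a j) (σ i) i =
      if i = j then N (σ j) j else M t (σ i) i := by
    intro i
    rw [Matrix.updateCol_apply]
    split_ifs with hij
    · subst hij; rfl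
    · rfl
  rw [Finset.prod_congr rfl (fun i _ => this i)]
  rw [← Finset.mul_prod_erase Finset.univ _ (Finset.mem_univ j)]
  rw [if_pos rfl]
  rw [Finset.prod_congr rfl (fun i hi => if_neg (Finset.ne_of_mem_erase hi))]
  ring_nf

lemma hasDerivAt_det_mul' {n : ℕ} (M : ℝ → Matrix (Fin n) (Fin n) ℝ)
    (C : Matrix (Fin n) (Fin n) ℝ) (t : ℝ)
    (h : ∀ a b, HasDerivAt (fun s => M s a b) ((M t * C) a b) t) :
    HasDerivAt (fun s => (M s).det) (C.trace * (M t).det) t := by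
  have H := hasDerivAt_det' M (M t * C) t h
  convert H using 1
  symm
  have : ∀ j : Fin n, ((M t).updateCol j (fun a => (M t * C) a j)).det
      = C j j • (M t).det := by
    intro j
    have hcol : (fun a => (M t * C) a j) = fun a => ∑ k, (fun k => C k j) k • M t a k := by
      funext a
      simp [Matrix.mul_apply, mul_comm]
    rw [hcol, Matrix.det_updateCol_sum]
  rw [Finset.sum_congr rfl (fun j _ => this j), ← Finset.sum_smul, Matrix.trace, smul_eq_mul]
  rfl

lemma ode_exp' (τ f : ℝ → ℝ) (hτ : Continuous τ)
    (hf : ∀ t, HasDerivAt f (τ t * f t) t) (h0 : f 0 = 1) :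
    ∀ t, f t = Real.exp (∫ s in (0:ℝ)..t, τ s) := by
  set I := fun t => ∫ s in (0:ℝ)..t, τ s with hIdef
  have hI : ∀ t, HasDerivAt I (τ t) t := by
    intro t
    exact intervalIntegral.integral_hasDerivAt_right (hτ.intervalIntegrable _ _)
      (hτ.stronglyMeasurableAtFilter _ _) hτ.continuousAt
  set g := fun t => f t * Real.exp (-I t) with hgdef
  have hg : ∀ t, HasDerivAt g 0 t := by
    intro t
    have := (hf t).mul ((hI t).neg.exp)
    refine this.congr_deriv ?_
    ring
  have hconst : ∀ t, g t = g 0 :=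
    fun t => is_const_of_deriv_eq_zero (fun s => (hg s).differentiableAt)
      (fun s => (hg s).deriv) t 0
  intro t
  have h1 : g 0 = 1 := by
    simp [hgdef, hIdef, h0, intervalIntegral.integral_same]
  have h2 := (hconst t).trans h1
  simp only [hgdef, Real.exp_neg] at h2
  have hne := Real.exp_ne_zero (I t)
  field_simp at h2
  exact h2

abbrev Esp (n : ℕ) := EuclideanSpace ℝ (Fin n)

section aux
variable {n : ℕ}

/-- Spatial derivative of a partial map from the joint derivative. -/
lemma partial_hasFDerivAt {W : Type*} [NormedAddCommGroup W] [NormedSpace ℝ W]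
    {G : ℝ × Esp n → W} (hG : Differentiable ℝ G)
    (t : ℝ) (y : Esp n) :
    HasFDerivAt (fun z => G (t, z))
      ((fderiv ℝ G (t, y)).comp (ContinuousLinearMap.inr ℝ ℝ (Esp n))) y :=
  HasFDerivAt.comp y (hG (t, y)).hasFDerivAt (hasFDerivAt_prodMk_right t y)

/-- The Jacobian of a C² flow satisfies the linearized ODE. -/
lemma flow_jacobian_ode (v X : ℝ → Esp n → Esp n)
    (hv : ContDiff ℝ 2 (fun q : ℝ × Esp n => v q.1 q.2))
    (hX : ContDiff ℝ 2 (fun q : ℝ × Esp n => X q.1 q.2))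
    (hflow : ∀ t y, HasDerivAt (fun s => X s y) (v t (X t y)) t)
    (x : Esp n) (t : ℝ) :
    HasDerivAt (fun s => fderiv ℝ (X s) x)
      ((fderiv ℝ (v t) (X t x)).comp (fderiv ℝ (X t) x)) t := by
  have hFd : Differentiable ℝ (fun q : ℝ × Esp n => X q.1 q.2) :=
    hX.differentiable (by norm_num)
  have hFvd : Differentiable ℝ (fun q : ℝ × Esp n => v q.1 q.2) :=
    hv.differentiable (by norm_num)
  have hDF : ContDiff ℝ 1 (fderiv ℝ (fun q : ℝ × Esp n => X q.1 q.2)) :=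
    hX.fderiv_right (by norm_num)
  have hDFd : Differentiable ℝ (fderiv ℝ (fun q : ℝ × Esp n => X q.1 q.2)) :=
    hDF.differentiable one_ne_zero
  have hXtd : ∀ (s : ℝ) (y : Esp n), HasFDerivAt (X s)
      ((fderiv ℝ (fun q : ℝ × Esp n => X q.1 q.2) (s, y)).comp
        (ContinuousLinearMap.inr ℝ ℝ (Esp n))) y :=
    fun s y => partial_hasFDerivAt hFd s y
  have hJeq : ∀ s, fderiv ℝ (X s) x
      = (fderiv ℝ (fun q : ℝ × Esp n => X q.1 q.2) (s, x)).comp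
        (ContinuousLinearMap.inr ℝ ℝ (Esp n)) :=
    fun s => (hXtd s x).fderiv
  have hPeq : ∀ (s : ℝ) (y : Esp n),
      fderiv ℝ (fun q : ℝ × Esp n => X q.1 q.2) (s, y) ((1:ℝ), (0:Esp n))
        = v s (X s y) := by
    intro s y
    have hc : HasDerivAt (fun u : ℝ => ((u, y) : ℝ × Esp n)) ((1:ℝ), (0:Esp n)) s :=
      (hasDerivAt_id s).prodMk (hasDerivAt_const s y)
    have h1 : HasDerivAt (fun u => X u y)
        (fderiv ℝ (fun q : ℝ × Esp n => X q.1 q.2) (s, y) ((1:ℝ), (0:Esp n))) s :=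
      by have := (hFd (s, y)).hasFDerivAt.comp_hasDerivAt s hc; exact this
    exact h1.unique (hflow s y)
  have hc : HasDerivAt (fun u : ℝ => ((u, x) : ℝ × Esp n)) ((1:ℝ), (0:Esp n)) t :=
    (hasDerivAt_id t).prodMk (hasDerivAt_const t x)
  have step1 : HasDerivAt (fun s => fderiv ℝ (fun q : ℝ × Esp n => X q.1 q.2) (s, x))
      (fderiv ℝ (fderiv ℝ (fun q : ℝ × Esp n => X q.1 q.2)) (t, x) ((1:ℝ), (0:Esp n))) t :=
    (hDFd (t, x)).hasFDerivAt.comp_hasDerivAt t hc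
  have step2 : HasDerivAt (fun s => fderiv ℝ (X s) x)
      (((ContinuousLinearMap.compL ℝ (Esp n) (ℝ × Esp n) (Esp n)).flip
          (ContinuousLinearMap.inr ℝ ℝ (Esp n)))
        (fderiv ℝ (fderiv ℝ (fun q : ℝ × Esp n => X q.1 q.2)) (t, x) ((1:ℝ), (0:Esp n)))) t := by
    have hJΦ : (fun s => fderiv ℝ (X s) x)
        = fun s => ((ContinuousLinearMap.compL ℝ (Esp n) (ℝ × Esp n) (Esp n)).flip
            (ContinuousLinearMap.inr ℝ ℝ (Esp n)))
          (fderiv ℝ (fun q : ℝ × Esp n => X q.1 q.2) (s, x)) := by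
      funext s; rw [hJeq s]; rfl
    rw [hJΦ]
    exact (ContinuousLinearMap.hasFDerivAt _).comp_hasDerivAt t step1
  have step3 : ((ContinuousLinearMap.compL ℝ (Esp n) (ℝ × Esp n) (Esp n)).flip
          (ContinuousLinearMap.inr ℝ ℝ (Esp n)))
        (fderiv ℝ (fderiv ℝ (fun q : ℝ × Esp n => X q.1 q.2)) (t, x) ((1:ℝ), (0:Esp n)))
      = (fderiv ℝ (v t) (X t x)).comp (fderiv ℝ (X t) x) := by
    have hsymm := second_derivative_symmetric
      (f := fun q : ℝ × Esp n => X q.1 q.2)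
      (f' := fderiv ℝ (fun q : ℝ × Esp n => X q.1 q.2))
      (fun y => (hFd y).hasFDerivAt) (hDFd (t, x)).hasFDerivAt
    have ha : HasFDerivAt (fun y : Esp n =>
        fderiv ℝ (fun q : ℝ × Esp n => X q.1 q.2) (t, y) ((1:ℝ), (0:Esp n)))
        ((ContinuousLinearMap.apply ℝ (Esp n) (((1:ℝ), (0:Esp n)) : ℝ × Esp n)).comp
          ((fderiv ℝ (fderiv ℝ (fun q : ℝ × Esp n => X q.1 q.2)) (t, x)).comp
            (ContinuousLinearMap.inr ℝ ℝ (Esp n)))) x := by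
      have h1 := partial_hasFDerivAt (G := fderiv ℝ (fun q : ℝ × Esp n => X q.1 q.2))
        hDFd t x
      exact ((ContinuousLinearMap.apply ℝ (Esp n)
        (((1:ℝ), (0:Esp n)) : ℝ × Esp n)).hasFDerivAt).comp x h1
    have hb : (fun y : Esp n =>
        fderiv ℝ (fun q : ℝ × Esp n => X q.1 q.2) (t, y) ((1:ℝ), (0:Esp n)))
        = fun y => v t (X t y) := funext fun y => hPeq t y
    have hc2 : HasFDerivAt (fun y : Esp n => v t (X t y))
        ((fderiv ℝ (v t) (X t x)).comp (fderiv ℝ (X t) x)) x := by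
      have h1 : HasFDerivAt (v t) (fderiv ℝ (v t) (X t x)) (X t x) := by
        have := partial_hasFDerivAt (G := fun q : ℝ × Esp n => v q.1 q.2) hFvd t (X t x)
        exact this.fderiv ▸ this
      have h2 : HasFDerivAt (X t) (fderiv ℝ (X t) x) x := (hJeq t) ▸ hXtd t x
      exact h1.comp x h2
    rw [hb] at ha
    have huniq := ha.unique hc2
    refine ContinuousLinearMap.ext fun h => ?_
    calc ((ContinuousLinearMap.compL ℝ (Esp n) (ℝ × Esp n) (Esp n)).flip
            (ContinuousLinearMap.inr ℝ ℝ (Esp n)))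
          (fderiv ℝ (fderiv ℝ (fun q : ℝ × Esp n => X q.1 q.2)) (t, x) ((1:ℝ), (0:Esp n))) h
        = fderiv ℝ (fderiv ℝ (fun q : ℝ × Esp n => X q.1 q.2)) (t, x)
            ((1:ℝ), (0:Esp n)) ((0:ℝ), h) := rfl
      _ = fderiv ℝ (fderiv ℝ (fun q : ℝ × Esp n => X q.1 q.2)) (t, x)
            ((0:ℝ), h) ((1:ℝ), (0:Esp n)) := (hsymm _ _).symm
      _ = ((ContinuousLinearMap.apply ℝ (Esp n) (((1:ℝ), (0:Esp n)) : ℝ × Esp n)).comp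
            ((fderiv ℝ (fderiv ℝ (fun q : ℝ × Esp n => X q.1 q.2)) (t, x)).comp
              (ContinuousLinearMap.inr ℝ ℝ (Esp n)))) h := rfl
      _ = ((fderiv ℝ (v t) (X t x)).comp (fderiv ℝ (X t) x)) h := by rw [huniq]
  rw [← step3]
  exact step2

end aux

section rest
variable {n : ℕ}

noncomputable def entryL (b : Module.Basis (Fin n) ℝ (Esp n)) (c a : Fin n) :
    (Esp n →L[ℝ] Esp n) →ₗ[ℝ] ℝ where
  toFun g := LinearMap.toMatrix b b (g : Esp n →ₗ[ℝ] Esp n) c a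
  map_add' g h := by simp
  map_smul' r g := by simp

theorem det_fderiv_flow_eq_exp_integral_div
    (n : ℕ) (hn : 1 ≤ n)
    (v X : ℝ → EuclideanSpace ℝ (Fin n) → EuclideanSpace ℝ (Fin n))
    (hv_bdd : ∃ C : ℝ, ∀ t x, ‖v t x‖ ≤ C)
    (hv_smooth : ContDiff ℝ 2 (fun q : ℝ × EuclideanSpace ℝ (Fin n) => v q.1 q.2))
    (hX_smooth : ContDiff ℝ 2 (fun q : ℝ × EuclideanSpace ℝ (Fin n) => X q.1 q.2))
    (hX0 : ∀ x, X 0 x = x)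
    (hflow : ∀ t x, HasDerivAt (fun s => X s x) (v t (X t x)) t) :
    ∀ (t : ℝ) (x : EuclideanSpace ℝ (Fin n)),
      LinearMap.det (fderiv ℝ (X t) x).toLinearMap =
        Real.exp (∫ s in (0:ℝ)..t, divg (v s) (X s x)) := by
  classical
  intro t₀ x
  have hJ' : ∀ t, HasDerivAt (fun s => fderiv ℝ (X s) x)
      ((fderiv ℝ (v t) (X t x)).comp (fderiv ℝ (X t) x)) t :=
    fun t => flow_jacobian_ode v X hv_smooth hX_smooth hflow x t
  set b : Module.Basis (Fin n) ℝ (Esp n) := (EuclideanSpace.basisFun (Fin n) ℝ).toBasis with hb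
  set Mt : ℝ → Matrix (Fin n) (Fin n) ℝ :=
    fun s => (LinearMap.toMatrix b b ((fderiv ℝ (X s) x : Esp n →L[ℝ] Esp n)
      : Esp n →ₗ[ℝ] Esp n))ᵀ with hMt
  set Ct : ℝ → Matrix (Fin n) (Fin n) ℝ :=
    fun s => (LinearMap.toMatrix b b ((fderiv ℝ (v s) (X s x) : Esp n →L[ℝ] Esp n)
      : Esp n →ₗ[ℝ] Esp n))ᵀ with hCt
  have hMt' : ∀ (t : ℝ) (a c : Fin n),
      HasDerivAt (fun s => Mt s a c) ((Mt t * Ct t) a c) t := by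
    intro t a c
    have h1 : HasDerivAt
        (fun s => (LinearMap.toContinuousLinearMap (entryL b c a)) (fderiv ℝ (X s) x))
        ((LinearMap.toContinuousLinearMap (entryL b c a))
          ((fderiv ℝ (v t) (X t x)).comp (fderiv ℝ (X t) x))) t :=
      (LinearMap.toContinuousLinearMap (entryL b c a)).hasFDerivAt.comp_hasDerivAt t (hJ' t)
    have h2 : (fun s => Mt s a c)
        = fun s => (LinearMap.toContinuousLinearMap (entryL b c a)) (fderiv ℝ (X s) x) := rfl
    have h3 : (LinearMap.toContinuousLinearMap (entryL b c a))
          ((fderiv ℝ (v t) (X t x)).comp (fderiv ℝ (X t) x)) = (Mt t * Ct t) a c := by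
      show LinearMap.toMatrix b b
          (((fderiv ℝ (v t) (X t x)).comp (fderiv ℝ (X t) x) : Esp n →L[ℝ] Esp n)
            : Esp n →ₗ[ℝ] Esp n) c a = (Mt t * Ct t) a c
      rw [ContinuousLinearMap.toLinearMap_comp, LinearMap.toMatrix_comp b b b, Matrix.mul_apply,
        hMt, hCt]
      simp only [Matrix.mul_apply, Matrix.transpose_apply]
      exact Finset.sum_congr rfl (fun k _ => mul_comm _ _)
    rw [h2, ← h3]
    exact h1
  have htrace : ∀ t, (Ct t).trace = divg (v t) (X t x) := by
    intro t
    rw [hCt]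
    rw [Matrix.trace_transpose, ← LinearMap.trace_eq_matrix_trace ℝ b]
    rfl
  have hτcont : Continuous (fun t => divg (v t) (X t x)) := by
    have hFvd : Differentiable ℝ (fun q : ℝ × Esp n => v q.1 q.2) :=
      hv_smooth.differentiable (by norm_num)
    have hAeq : ∀ t, (fderiv ℝ (v t) (X t x) : Esp n →L[ℝ] Esp n)
        = (fderiv ℝ (fun q : ℝ × Esp n => v q.1 q.2) (t, X t x)).comp
            (ContinuousLinearMap.inr ℝ ℝ (Esp n)) :=
      fun t => (partial_hasFDerivAt hFvd t (X t x)).fderiv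
    have c1 : Continuous fun t : ℝ => ((t, X t x) : ℝ × Esp n) := by
      refine continuous_id.prodMk ?_
      exact hX_smooth.continuous.comp (continuous_id.prodMk continuous_const)
    have c2 : Continuous (fderiv ℝ (fun q : ℝ × Esp n => v q.1 q.2)) :=
      (hv_smooth.fderiv_right (m := 1) (by norm_num)).continuous
    have c3 : Continuous fun t : ℝ =>
        ((fderiv ℝ (fun q : ℝ × Esp n => v q.1 q.2) (t, X t x)).comp
          (ContinuousLinearMap.inr ℝ ℝ (Esp n))) :=
      ((ContinuousLinearMap.compL ℝ (Esp n) (ℝ × Esp n) (Esp n)).flip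
        (ContinuousLinearMap.inr ℝ ℝ (Esp n))).continuous.comp (c2.comp c1)
    have hT : Continuous fun g : Esp n →L[ℝ] Esp n =>
        LinearMap.trace ℝ (Esp n) (g : Esp n →ₗ[ℝ] Esp n) :=
      LinearMap.continuous_of_finiteDimensional
        ((LinearMap.trace ℝ (Esp n)).comp (ContinuousLinearMap.coeLM ℝ))
    have heq : (fun t => divg (v t) (X t x))
        = fun t => LinearMap.trace ℝ (Esp n)
            ((((fderiv ℝ (fun q : ℝ × Esp n => v q.1 q.2) (t, X t x)).comp
              (ContinuousLinearMap.inr ℝ ℝ (Esp n))) : Esp n →L[ℝ] Esp n)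
              : Esp n →ₗ[ℝ] Esp n) := by
      funext t
      show LinearMap.trace ℝ (Esp n)
        ((fderiv ℝ (v t) (X t x) : Esp n →L[ℝ] Esp n) : Esp n →ₗ[ℝ] Esp n) = _
      rw [hAeq t]
    rw [heq]
    exact hT.comp c3
  have hf : ∀ t, HasDerivAt (fun s => (Mt s).det)
      ((divg (v t) (X t x)) * (Mt t).det) t := by
    intro t
    have := hasDerivAt_det_mul' Mt (Ct t) t (hMt' t)
    rwa [htrace t] at this
  have hf0 : (Mt 0).det = 1 := by
    have hX0id : X 0 = id := funext hX0
    have hJ0 : (fderiv ℝ (X 0) x : Esp n →L[ℝ] Esp n) = ContinuousLinearMap.id ℝ (Esp n) := by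
      rw [hX0id]; exact fderiv_id
    simp only [hMt, hJ0]
    simp
  have hdet : LinearMap.det ((fderiv ℝ (X t₀) x : Esp n →L[ℝ] Esp n) : Esp n →ₗ[ℝ] Esp n)
      = (Mt t₀).det := by
    simp only [hMt]
    rw [Matrix.det_transpose, LinearMap.det_toMatrix]
  rw [hdet]
  exact ode_exp' _ (fun s => (Mt s).det) hτcont hf hf0 t₀

end rest
end

section
/- Let n ≥ 1, let v : ℝ → ℝⁿ → ℝⁿ be continuous, differentiable in x, and let X : ℝ → ℝⁿ → ℝⁿ be a flow of v. Suppose p : ℝ → ℝⁿ → ℝ is continuously differentiable jointly in (t, y) and satisfies the continuity equation for v at every point, i.e. ∂p/∂t(t, y) + ∇p_t(y)·v_t(y) + p(t, y)·(∇·v_t)(y) = 0 for all (t, y). Then for every x ∈ ℝⁿ the map t ↦ p(t, X(t, x)) is differentiable and satisfies d/dt [p(t, X(t, x))] = −p(t, X(t, x)) · (∇·v_t)(X(t, x)). -/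
open MeasureTheory
open scoped RealInnerProductSpace

theorem density_along_flow_hasDerivAt
    (n : ℕ) (hn : 1 ≤ n)
    (v X : ℝ → EuclideanSpace ℝ (Fin n) → EuclideanSpace ℝ (Fin n))
    (hv_cont : Continuous (fun q : ℝ × EuclideanSpace ℝ (Fin n) => v q.1 q.2))
    (hv_diff : ∀ t, Differentiable ℝ (v t))
    (hX0 : ∀ x, X 0 x = x)
    (hflow : ∀ t x, HasDerivAt (fun s => X s x) (v t (X t x)) t)
    (p : ℝ → EuclideanSpace ℝ (Fin n) → ℝ)
    (hp_smooth : ContDiff ℝ 1 (fun q : ℝ × EuclideanSpace ℝ (Fin n) => p q.1 q.2))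
    (hcont_eq : ∀ (t : ℝ) (y : EuclideanSpace ℝ (Fin n)),
      deriv (fun s => p s y) t + ⟪gradient (p t) y, v t y⟫ + p t y * divg (v t) y = 0) :
    ∀ (x : EuclideanSpace ℝ (Fin n)) (t : ℝ),
      HasDerivAt (fun s => p s (X s x))
        (-(p t (X t x) * divg (v t) (X t x))) t := by
  intro x t
  set y := X t x with hy
  set w := v t y with hw
  set F : ℝ × EuclideanSpace ℝ (Fin n) → ℝ := fun q => p q.1 q.2 with hF
  have hFdiff : DifferentiableAt ℝ F (t, y) :=
    (hp_smooth.differentiable one_ne_zero) (t, y)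
  set L := fderiv ℝ F (t, y) with hL
  -- curve derivative
  have hγ : HasDerivAt (fun s => ((s, X s x) : ℝ × EuclideanSpace ℝ (Fin n)))
      ((1 : ℝ), w) t := (hasDerivAt_id t).prodMk (hflow t x)
  have hcomp : HasDerivAt (fun s => p s (X s x)) (L (1, w)) t :=
    by exact hFdiff.hasFDerivAt.comp_hasDerivAt t hγ
  -- time partial
  have h1 : HasDerivAt (fun s => p s y) (L (1, (0 : EuclideanSpace ℝ (Fin n)))) t := by
    have hc : HasDerivAt (fun s => ((s, y) : ℝ × EuclideanSpace ℝ (Fin n)))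
        ((1 : ℝ), (0 : EuclideanSpace ℝ (Fin n))) t :=
      (hasDerivAt_id t).prodMk (hasDerivAt_const t y)
    exact hFdiff.hasFDerivAt.comp_hasDerivAt t hc
  -- space partial
  have h2 : HasFDerivAt (p t) (L.comp (ContinuousLinearMap.inr ℝ ℝ (EuclideanSpace ℝ (Fin n)))) y := by
    have hc : HasFDerivAt (fun z : EuclideanSpace ℝ (Fin n) => ((t, z) : ℝ × EuclideanSpace ℝ (Fin n)))
        (ContinuousLinearMap.inr ℝ ℝ (EuclideanSpace ℝ (Fin n))) y :=
      hasFDerivAt_prodMk_right t y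
    exact hFdiff.hasFDerivAt.comp y hc
  have hgrad : ⟪gradient (p t) y, w⟫ = L (0, w) := by
    have : fderiv ℝ (p t) y = L.comp (ContinuousLinearMap.inr ℝ ℝ (EuclideanSpace ℝ (Fin n))) :=
      h2.fderiv
    rw [gradient, this]
    simp [InnerProductSpace.toDual_symm_apply]
  have hsum : L (1, w) = L (1, (0:EuclideanSpace ℝ (Fin n))) + L (0, w) := by
    rw [← L.map_add]; norm_num
  have heq := hcont_eq t y
  rw [h1.deriv] at heq
  have : L (1, w) = -(p t y * divg (v t) y) := by
    rw [hsum, ← hgrad]; linarith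
  rw [← this]
  exact hcomp
end

section
/- Let n ≥ 1, let v : ℝ → ℝⁿ → ℝⁿ be continuous, differentiable in x with (t, y) ↦ (∇·v_t)(y) continuous, and let X : ℝ → ℝⁿ → ℝⁿ be a flow of v that is continuous in (t, x). Suppose p : ℝ → ℝⁿ → ℝ is continuously differentiable jointly in (t, y) and satisfies ∂p/∂t(t, y) + ∇p_t(y)·v_t(y) + p(t, y)·(∇·v_t)(y) = 0 for all (t, y). Then for all t ∈ ℝ and x ∈ ℝⁿ: p(t, X(t, x)) = p(0, x) · exp(−∫₀ᵗ (∇·v_s)(X(s, x)) ds). -/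
open MeasureTheory
open scoped RealInnerProductSpace

theorem density_along_flow_eq_exp_neg_integral_div
    (n : ℕ) (hn : 1 ≤ n)
    (v X : ℝ → EuclideanSpace ℝ (Fin n) → EuclideanSpace ℝ (Fin n))
    (hv_cont : Continuous (fun q : ℝ × EuclideanSpace ℝ (Fin n) => v q.1 q.2))
    (hv_diff : ∀ t, Differentiable ℝ (v t))
    (hdiv_cont : Continuous (fun q : ℝ × EuclideanSpace ℝ (Fin n) => divg (v q.1) q.2))
    (hX0 : ∀ x, X 0 x = x)
    (hflow : ∀ t x, HasDerivAt (fun s => X s x) (v t (X t x)) t)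
    (hX_cont : Continuous (fun q : ℝ × EuclideanSpace ℝ (Fin n) => X q.1 q.2))
    (p : ℝ → EuclideanSpace ℝ (Fin n) → ℝ)
    (hp_smooth : ContDiff ℝ 1 (fun q : ℝ × EuclideanSpace ℝ (Fin n) => p q.1 q.2))
    (hcont_eq : ∀ (t : ℝ) (y : EuclideanSpace ℝ (Fin n)),
      deriv (fun s => p s y) t + ⟪gradient (p t) y, v t y⟫ + p t y * divg (v t) y = 0) :
    ∀ (t : ℝ) (x : EuclideanSpace ℝ (Fin n)),
      p t (X t x) = p 0 x * Real.exp (-∫ s in (0:ℝ)..t, divg (v s) (X s x)) := by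
  intro t x
  set F : ℝ × EuclideanSpace ℝ (Fin n) → ℝ := fun q => p q.1 q.2 with hFdef
  have hFdiff : Differentiable ℝ F := hp_smooth.differentiable one_ne_zero
  -- key fderiv facts
  have hpartial1 : ∀ (s : ℝ) (y : EuclideanSpace ℝ (Fin n)),
      deriv (fun r => p r y) s = fderiv ℝ F (s, y) (1, 0) := by
    intro s y
    have h1 : HasDerivAt (fun r : ℝ => ((r, y) : ℝ × EuclideanSpace ℝ (Fin n)))
        ((1 : ℝ), (0 : EuclideanSpace ℝ (Fin n))) s :=
      (hasDerivAt_id s).prodMk (hasDerivAt_const s y)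
    exact ((hFdiff (s, y)).hasFDerivAt.comp_hasDerivAt s h1).deriv
  have hpartial2 : ∀ (s : ℝ) (y w : EuclideanSpace ℝ (Fin n)),
      ⟪gradient (p s) y, w⟫ = fderiv ℝ F (s, y) (0, w) := by
    intro s y w
    have h2 : HasFDerivAt (fun z => p s z)
        ((fderiv ℝ F (s, y)).comp (ContinuousLinearMap.inr ℝ ℝ _)) y :=
      (hFdiff (s, y)).hasFDerivAt.comp y ((hasFDerivAt_const s y).prodMk (hasFDerivAt_id y))
    rw [gradient, InnerProductSpace.toDual_symm_apply, h2.fderiv]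
    simp
  -- continuity of the divergence along the flow
  have hd_cont : Continuous (fun s : ℝ => divg (v s) (X s x)) := by
    have : Continuous (fun s : ℝ => ((s, X s x) : ℝ × EuclideanSpace ℝ (Fin n))) :=
      continuous_id.prodMk (hX_cont.comp (continuous_id.prodMk continuous_const))
    exact hdiv_cont.comp this
  -- derivative of the integral
  set I : ℝ → ℝ := fun r => ∫ s in (0:ℝ)..r, divg (v s) (X s x) with hIdef
  have hI : ∀ s : ℝ, HasDerivAt I (divg (v s) (X s x)) s := by
    intro s
    exact intervalIntegral.integral_hasDerivAt_right
      (hd_cont.intervalIntegrable 0 s)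
      (hd_cont.stronglyMeasurableAtFilter _ _)
      hd_cont.continuousAt
  -- derivative of f(s) = p s (X s x)
  set f : ℝ → ℝ := fun s => p s (X s x) with hfdef
  have hf : ∀ s : ℝ, HasDerivAt f (-(f s * divg (v s) (X s x))) s := by
    intro s
    have hcurve : HasDerivAt (fun r : ℝ => ((r, X r x) : ℝ × EuclideanSpace ℝ (Fin n)))
        ((1 : ℝ), v s (X s x)) s :=
      (hasDerivAt_id s).prodMk (hflow s x)
    have hcomp : HasDerivAt f (fderiv ℝ F (s, X s x) (1, v s (X s x))) s :=
      by have := (hFdiff (s, X s x)).hasFDerivAt.comp_hasDerivAt s hcurve; exact this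
    have hsum : fderiv ℝ F (s, X s x) (1, v s (X s x)) =
        fderiv ℝ F (s, X s x) (1, 0) + fderiv ℝ F (s, X s x) (0, v s (X s x)) := by
      rw [← map_add]; norm_num
    have heq := hcont_eq s (X s x)
    rw [hpartial1 s (X s x), hpartial2 s (X s x)] at heq
    have : fderiv ℝ F (s, X s x) (1, v s (X s x)) = -(f s * divg (v s) (X s x)) := by
      rw [hsum]; linarith
    rwa [this] at hcomp
  -- h := f * exp ∘ I is constant
  have hh : ∀ s : ℝ, HasDerivAt (fun r => f r * Real.exp (I r)) 0 s := by
    intro s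
    have hexp : HasDerivAt (fun r => Real.exp (I r))
        (Real.exp (I s) * divg (v s) (X s x)) s := by
      exact (hI s).exp
    have := (hf s).mul hexp
    rw [show (0:ℝ) = -(f s * divg (v s) (X s x)) * Real.exp (I s) + f s * (Real.exp (I s) * divg (v s) (X s x)) by ring]
    exact this
  have hconst : ∀ s : ℝ, f s * Real.exp (I s) = f 0 * Real.exp (I 0) := by
    intro s
    have hdiffh : Differentiable ℝ (fun r => f r * Real.exp (I r)) :=
      fun r => (hh r).differentiableAt
    have hderiv0 : ∀ r, deriv (fun r => f r * Real.exp (I r)) r = 0 := fun r => (hh r).deriv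
    exact is_const_of_deriv_eq_zero hdiffh hderiv0 s 0
  have h0 : f 0 = p 0 x := by simp [hfdef, hX0 x]
  have hI0 : I 0 = 0 := by simp [hIdef]
  have := hconst t
  rw [h0, hI0, Real.exp_zero, mul_one] at this
  have hft : f t = p 0 x * Real.exp (-(I t)) := by
    have hne : Real.exp (I t) ≠ 0 := (Real.exp_pos _).ne'
    rw [Real.exp_neg, ← this]
    field_simp
  simpa [hfdef, hIdef] using hft
end

section
/- (Theorem 3.1, converse direction, pointwise form.) Let n ≥ 1, let v : ℝ → ℝⁿ → ℝⁿ be bounded and continuously differentiable jointly in (t, x), and let X : ℝ → ℝⁿ → ℝⁿ be a flow of v that is continuous in (t, x). Let p₀ : ℝⁿ → ℝ be Lebesgue integrable, and let p : ℝ → ℝⁿ → ℝ be continuously differentiable jointly in (t, y) and such that, for every continuous compactly supported g : ℝⁿ → ℝ and every t ∈ ℝ, ∫_{ℝⁿ} g(y) p(t, y) dy = ∫_{ℝⁿ} g(X(t, x)) p₀(x) dx. Then p satisfies the continuity equation ∂p/∂t(t, y) + ∇p_t(y)·v_t(y) + p(t, y)·(∇·v_t)(y) = 0 for all t ∈ ℝ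 and y ∈ ℝⁿ. -/
open MeasureTheory
open scoped RealInnerProductSpace

variable {n : ℕ}

lemma divg_eq_sum (w : EuclideanSpace ℝ (Fin n) → EuclideanSpace ℝ (Fin n))
    (y : EuclideanSpace ℝ (Fin n)) :
    divg w y = ∑ i, fderiv ℝ w y (EuclideanSpace.single i 1) i := by
  rw [divg, LinearMap.trace_eq_matrix_trace ℝ (EuclideanSpace.basisFun (Fin n) ℝ).toBasis,
    Matrix.trace]
  simp [Matrix.diag, LinearMap.toMatrix_apply, OrthonormalBasis.coe_toBasis_repr_apply,
    EuclideanSpace.basisFun_repr, EuclideanSpace.basisFun_apply]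

lemma divg_smul (c : EuclideanSpace ℝ (Fin n) → ℝ)
    (u : EuclideanSpace ℝ (Fin n) → EuclideanSpace ℝ (Fin n)) (y : EuclideanSpace ℝ (Fin n))
    (hc : DifferentiableAt ℝ c y) (hu : DifferentiableAt ℝ u y) :
    divg (fun z => c z • u z) y = fderiv ℝ c y (u y) + c y * divg u y := by
  rw [divg_eq_sum, divg_eq_sum, fderiv_fun_smul hc hu]
  have huy : u y = ∑ i, u y i • EuclideanSpace.single i 1 := by
    have := (EuclideanSpace.basisFun (Fin n) ℝ).sum_repr (u y)
    simpa [EuclideanSpace.basisFun_repr, EuclideanSpace.basisFun_apply] using this.symm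
  calc ∑ i, (c y • fderiv ℝ u y + (fderiv ℝ c y).smulRight (u y)) (EuclideanSpace.single i 1) i
      = ∑ i, (fderiv ℝ c y (EuclideanSpace.single i 1) * u y i
          + c y * fderiv ℝ u y (EuclideanSpace.single i 1) i) := by
        refine Finset.sum_congr rfl fun i _ => ?_
        simp [mul_comm]
        ring
    _ = fderiv ℝ c y (u y) + c y * ∑ i, fderiv ℝ u y (EuclideanSpace.single i 1) i := by
        rw [Finset.sum_add_distrib, ← Finset.mul_sum]
        congr 1
        conv_rhs => rw [huy]
        rw [_root_.map_sum]
        refine Finset.sum_congr rfl fun i _ => ?_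
        rw [(fderiv ℝ c y).map_smul]
        simp [mul_comm]

lemma integral_fderiv_apply_eq_zero {f : EuclideanSpace ℝ (Fin n) → ℝ}
    (hf : ContDiff ℝ 1 f) (h2f : HasCompactSupport f) (v : EuclideanSpace ℝ (Fin n)) :
    ∫ y, fderiv ℝ f y v = 0 := by
  have hcont : Continuous fun y => fderiv ℝ f y v :=
    ((ContinuousLinearMap.apply ℝ ℝ v).continuous).comp (hf.continuous_fderiv one_ne_zero)
  have hcs : HasCompactSupport fun y => fderiv ℝ f y v := by
    have := (h2f.fderiv ℝ).comp_left (g := fun L : EuclideanSpace ℝ (Fin n) →L[ℝ] ℝ => L v)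
      (by simp)
    simpa [Function.comp_def] using this
  have h := integral_mul_fderiv_eq_neg_fderiv_mul_of_integrable (μ := volume)
    (f := fun _ : EuclideanSpace ℝ (Fin n) => (1:ℝ)) (g := f) (v := v)
    (by simpa [fderiv_const] using (integrable_zero _ _ (volume : Measure (EuclideanSpace ℝ (Fin n)))))
    (by simpa using hcont.integrable_of_hasCompactSupport hcs)
    (by simpa using hf.continuous.integrable_of_hasCompactSupport h2f)
    (fun x _ => differentiable_const (1:ℝ) x) (fun x _ => hf.differentiable one_ne_zero x)
  simpa [fderiv_const] using h

lemma integral_divg_eq_zero {w : EuclideanSpace ℝ (Fin n) → EuclideanSpace ℝ (Fin n)}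
    (hw : ContDiff ℝ 1 w) (h2w : HasCompactSupport w) :
    ∫ y, divg w y = 0 := by
  have hkey : ∀ (i : Fin n) (y : EuclideanSpace ℝ (Fin n)),
      fderiv ℝ w y (EuclideanSpace.single i 1) i
        = fderiv ℝ (fun z => w z i) y (EuclideanSpace.single i 1) := by
    intro i y
    have : HasFDerivAt (fun z => w z i)
        ((EuclideanSpace.proj (𝕜 := ℝ) i).comp (fderiv ℝ w y)) y :=
      (EuclideanSpace.proj (𝕜 := ℝ) i).hasFDerivAt.comp y (hw.differentiable one_ne_zero y).hasFDerivAt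
    rw [this.fderiv]
    rfl
  have hsum : ∀ y, divg w y = ∑ i, fderiv ℝ (fun z => w z i) y (EuclideanSpace.single i 1) := by
    intro y
    rw [divg_eq_sum]
    exact Finset.sum_congr rfl fun i _ => hkey i y
  rw [show (fun y => divg w y) = fun y =>
      ∑ i, fderiv ℝ (fun z => w z i) y (EuclideanSpace.single i 1) from funext hsum]
  have hci : ∀ i : Fin n, ContDiff ℝ 1 (fun z => w z i) := fun i =>
    (EuclideanSpace.proj (𝕜 := ℝ) i).contDiff.comp hw
  have hcsi : ∀ i : Fin n, HasCompactSupport (fun z => w z i) := fun i => by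
    have := h2w.comp_left (g := fun x : EuclideanSpace ℝ (Fin n) => x i) (by simp)
    simpa [Function.comp_def] using this
  rw [integral_finset_sum]
  · exact Finset.sum_eq_zero fun i _ =>
      integral_fderiv_apply_eq_zero (hci i) (hcsi i) _
  · intro i _
    refine Continuous.integrable_of_hasCompactSupport ?_ ?_
    · exact ((ContinuousLinearMap.apply ℝ ℝ (EuclideanSpace.single i 1)).continuous).comp
        ((hci i).continuous_fderiv one_ne_zero)
    · have := ((hcsi i).fderiv ℝ).comp_left
        (g := fun L : EuclideanSpace ℝ (Fin n) →L[ℝ] ℝ => L (EuclideanSpace.single i 1)) (by simp)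
      simpa [Function.comp_def] using this

theorem continuity_equation_of_pushforward_density
    (n : ℕ) (hn : 1 ≤ n)
    (v X : ℝ → EuclideanSpace ℝ (Fin n) → EuclideanSpace ℝ (Fin n))
    (hv_bdd : ∃ C : ℝ, ∀ t x, ‖v t x‖ ≤ C)
    (hv_smooth : ContDiff ℝ 1 (fun q : ℝ × EuclideanSpace ℝ (Fin n) => v q.1 q.2))
    (hX0 : ∀ x, X 0 x = x)
    (hflow : ∀ t x, HasDerivAt (fun s => X s x) (v t (X t x)) t)
    (hX_cont : Continuous (fun q : ℝ × EuclideanSpace ℝ (Fin n) => X q.1 q.2))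
    (p₀ : EuclideanSpace ℝ (Fin n) → ℝ) (hp₀ : Integrable p₀)
    (p : ℝ → EuclideanSpace ℝ (Fin n) → ℝ)
    (hp_smooth : ContDiff ℝ 1 (fun q : ℝ × EuclideanSpace ℝ (Fin n) => p q.1 q.2))
    (hweak : ∀ (g : EuclideanSpace ℝ (Fin n) → ℝ), Continuous g → HasCompactSupport g →
      ∀ t : ℝ, ∫ y, g y * p t y = ∫ x, g (X t x) * p₀ x) :
    ∀ (t : ℝ) (y : EuclideanSpace ℝ (Fin n)),
      deriv (fun s => p s y) t + ⟪gradient (p t) y, v t y⟫ + p t y * divg (v t) y = 0 := by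
  intro t y₀
  classical
  have hPdiff := hp_smooth.differentiable one_ne_zero
  have hVdiff := hv_smooth.differentiable one_ne_zero
  have hPc : Continuous fun q : ℝ × EuclideanSpace ℝ (Fin n) => p q.1 q.2 := hp_smooth.continuous
  have hVc : Continuous fun q : ℝ × EuclideanSpace ℝ (Fin n) => v q.1 q.2 := hv_smooth.continuous
  have hPfc : Continuous (fderiv ℝ fun q : ℝ × EuclideanSpace ℝ (Fin n) => p q.1 q.2) :=
    hp_smooth.continuous_fderiv one_ne_zero
  have hVfc : Continuous (fderiv ℝ fun q : ℝ × EuclideanSpace ℝ (Fin n) => v q.1 q.2) :=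
    hv_smooth.continuous_fderiv one_ne_zero
  -- time derivative of p
  have hpd : ∀ (s : ℝ) (z : EuclideanSpace ℝ (Fin n)), HasDerivAt (fun s' => p s' z)
      (fderiv ℝ (fun q : ℝ × EuclideanSpace ℝ (Fin n) => p q.1 q.2) (s, z) (1, 0)) s := by
    intro s z
    have h1 : HasDerivAt (fun s' : ℝ => (s', z)) ((1:ℝ), (0 : EuclideanSpace ℝ (Fin n))) s :=
      (hasDerivAt_id s).prodMk (hasDerivAt_const s z)
    exact (hPdiff (s, z)).hasFDerivAt.comp_hasDerivAt s h1
  -- space derivatives of p and v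
  have hptd : ∀ (s : ℝ) (z : EuclideanSpace ℝ (Fin n)), HasFDerivAt (p s)
      ((fderiv ℝ (fun q : ℝ × EuclideanSpace ℝ (Fin n) => p q.1 q.2) (s, z)).comp
        (ContinuousLinearMap.inr ℝ ℝ (EuclideanSpace ℝ (Fin n)))) z := fun s z =>
    (hPdiff (s, z)).hasFDerivAt.comp z (hasFDerivAt_prodMk_right s z)
  have hvtd : ∀ (s : ℝ) (z : EuclideanSpace ℝ (Fin n)), HasFDerivAt (v s)
      ((fderiv ℝ (fun q : ℝ × EuclideanSpace ℝ (Fin n) => v q.1 q.2) (s, z)).comp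
        (ContinuousLinearMap.inr ℝ ℝ (EuclideanSpace ℝ (Fin n)))) z := fun s z =>
    (hVdiff (s, z)).hasFDerivAt.comp z (hasFDerivAt_prodMk_right s z)
  have hpt1 : ∀ s : ℝ, ContDiff ℝ 1 (p s) := fun s =>
    hp_smooth.comp (contDiff_const.prodMk contDiff_id)
  have hvt1 : ∀ s : ℝ, ContDiff ℝ 1 (v s) := fun s =>
    hv_smooth.comp (contDiff_const.prodMk contDiff_id)
  have hptc : ∀ s : ℝ, Continuous (p s) := fun s => (hpt1 s).continuous
  have hvtc : ∀ s : ℝ, Continuous (v s) := fun s => (hvt1 s).continuous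
  -- divergence of v t : formula and continuity
  have hdvg : ∀ (s : ℝ) (z : EuclideanSpace ℝ (Fin n)), divg (v s) z =
      ∑ i, (fderiv ℝ (fun q : ℝ × EuclideanSpace ℝ (Fin n) => v q.1 q.2) (s, z))
        ((0:ℝ), EuclideanSpace.single i 1) i := by
    intro s z
    rw [divg_eq_sum]
    refine Finset.sum_congr rfl fun i _ => ?_
    rw [(hvtd s z).fderiv]
    rfl
  have hdvc : ∀ s : ℝ, Continuous fun z => divg (v s) z := by
    intro s
    rw [show (fun z => divg (v s) z) = fun z =>
        ∑ i, (fderiv ℝ (fun q : ℝ × EuclideanSpace ℝ (Fin n) => v q.1 q.2) (s, z))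
          ((0:ℝ), EuclideanSpace.single i 1) i from funext (hdvg s)]
    refine continuous_finset_sum _ fun i _ => ?_
    exact (EuclideanSpace.proj (𝕜 := ℝ) i).continuous.comp
      ((hVfc.comp (continuous_const.prodMk continuous_id)).clm_apply continuous_const)
  -- spatial derivative of p t in direction v t: formula and continuity
  have hfpt_eq : ∀ (s : ℝ) (z : EuclideanSpace ℝ (Fin n)), fderiv ℝ (p s) z (v s z)
      = fderiv ℝ (fun q : ℝ × EuclideanSpace ℝ (Fin n) => p q.1 q.2) (s, z) ((0:ℝ), v s z) :=
    fun s z => by rw [(hptd s z).fderiv]; rfl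
  have hfptc : ∀ s : ℝ, Continuous fun z => fderiv ℝ (p s) z (v s z) := by
    intro s
    rw [show (fun z => fderiv ℝ (p s) z (v s z)) = fun z =>
        fderiv ℝ (fun q : ℝ × EuclideanSpace ℝ (Fin n) => p q.1 q.2) (s, z) ((0:ℝ), v s z)
      from funext (hfpt_eq s)]
    exact (hPfc.comp (continuous_const.prodMk continuous_id)).clm_apply
      (continuous_const.prodMk (hvtc s))
  have hdptc : Continuous fun z =>
      fderiv ℝ (fun q : ℝ × EuclideanSpace ℝ (Fin n) => p q.1 q.2) (t, z)
        ((1:ℝ), (0 : EuclideanSpace ℝ (Fin n))) :=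
    (hPfc.comp (continuous_const.prodMk continuous_id)).clm_apply continuous_const
  set F : EuclideanSpace ℝ (Fin n) → ℝ := fun z =>
      fderiv ℝ (fun q : ℝ × EuclideanSpace ℝ (Fin n) => p q.1 q.2) (t, z) (1, 0)
        + fderiv ℝ (p t) z (v t z) + p t z * divg (v t) z with hF
  have hFc : Continuous F := (hdptc.add (hfptc t)).add ((hptc t).mul (hdvc t))
  have key : ∀ g : EuclideanSpace ℝ (Fin n) → ℝ, ContDiff ℝ 1 g → HasCompactSupport g →
      ∫ z, g z * F z = 0 := by
    intro g hg h2g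
    have hgc := hg.continuous
    obtain ⟨Cg, hCg⟩ := hgc.bounded_above_of_compact_support h2g
    obtain ⟨Kg, hKg⟩ := (hg.continuous_fderiv one_ne_zero).bounded_above_of_compact_support (h2g.fderiv ℝ)
    obtain ⟨Cv, hCv⟩ := hv_bdd
    have hCv0 : 0 ≤ Cv := le_trans (norm_nonneg _) (hCv 0 0)
    have hKg0 : 0 ≤ Kg := le_trans (norm_nonneg _) (hKg 0)
    have htsc : IsCompact (tsupport g) := h2g
    -- Step 1 : derivative of s ↦ ∫ g z * p s z
    obtain ⟨M, hM⟩ := ((isCompact_Icc (a := t - 1) (b := t + 1)).prod htsc).exists_bound_of_continuousOn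
      (f := fun q : ℝ × EuclideanSpace ℝ (Fin n) =>
        g q.2 * fderiv ℝ (fun q' : ℝ × EuclideanSpace ℝ (Fin n) => p q'.1 q'.2) q (1, 0))
      (((hgc.comp continuous_snd).mul (hPfc.clm_apply continuous_const)).continuousOn)
    have hbnd_int : Integrable ((tsupport g).indicator fun _ => M) :=
      (integrableOn_const htsc.measure_lt_top.ne).integrable_indicator
        (isClosed_tsupport g).measurableSet
    have S1 := hasDerivAt_integral_of_dominated_loc_of_deriv_le (μ := volume)
      (F := fun s z => g z * p s z)
      (F' := fun s z => g z *
        fderiv ℝ (fun q : ℝ × EuclideanSpace ℝ (Fin n) => p q.1 q.2) (s, z) (1, 0))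
      (x₀ := t) (s := Metric.ball t 1) (Metric.ball_mem_nhds t one_pos)
      (Filter.Eventually.of_forall fun s => (hgc.mul (hptc s)).aestronglyMeasurable)
      ((hgc.mul (hptc t)).integrable_of_hasCompactSupport h2g.mul_right)
      ((hgc.mul hdptc).aestronglyMeasurable)
      (Filter.Eventually.of_forall fun z s hs => by
        by_cases hz : z ∈ tsupport g
        · rw [Set.indicator_of_mem hz]
          refine hM (s, z) ?_
          refine Set.mem_prod.2 ⟨?_, hz⟩
          rw [Real.ball_eq_Ioo] at hs
          exact ⟨le_of_lt hs.1, le_of_lt hs.2⟩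
        · rw [Set.indicator_of_notMem hz]
          simp [image_eq_zero_of_notMem_tsupport hz])
      hbnd_int
      (Filter.Eventually.of_forall fun z s hs => (hpd s z).const_mul (g z))
    -- Step 2 : derivative of s ↦ ∫ g (X s x) * p₀ x
    have hXc : ∀ s : ℝ, Continuous fun x => X s x := fun s =>
      hX_cont.comp (continuous_const.prodMk continuous_id)
    have S2 := hasDerivAt_integral_of_dominated_loc_of_deriv_le (μ := volume)
      (F := fun s x => g (X s x) * p₀ x)
      (F' := fun s x => fderiv ℝ g (X s x) (v s (X s x)) * p₀ x)
      (x₀ := t) (s := Metric.ball t 1) (Metric.ball_mem_nhds t one_pos)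
      (Filter.Eventually.of_forall fun s =>
        ((hgc.comp (hXc s)).aestronglyMeasurable).mul hp₀.1)
      (hp₀.bdd_mul ((hgc.comp (hXc t)).aestronglyMeasurable) (c := Cg) (Filter.Eventually.of_forall fun x => hCg (X t x)))
      ((((hg.continuous_fderiv one_ne_zero).comp (hXc t)).clm_apply
        ((hvtc t).comp (hXc t))).aestronglyMeasurable.mul hp₀.1)
      (Filter.Eventually.of_forall fun x s hs => by
        rw [norm_mul]
        refine mul_le_mul_of_nonneg_right ?_ (norm_nonneg _)
        calc ‖fderiv ℝ g (X s x) (v s (X s x))‖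
            ≤ ‖fderiv ℝ g (X s x)‖ * ‖v s (X s x)‖ := (fderiv ℝ g (X s x)).le_opNorm _
          _ ≤ Kg * Cv := mul_le_mul (hKg _) (hCv _ _) (norm_nonneg _) hKg0)
      (hp₀.norm.const_mul (Kg * Cv))
      (Filter.Eventually.of_forall fun x s hs =>
        ((hg.differentiable one_ne_zero (X s x)).hasFDerivAt.comp_hasDerivAt s (hflow s x)).mul_const
          (p₀ x))
    -- Step 3 : the two derivatives agree
    have hAB : (fun s => ∫ z, g z * p s z) = fun s => ∫ x, g (X s x) * p₀ x :=
      funext fun s => hweak g hgc h2g s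
    have heq1 : (∫ z, g z *
          fderiv ℝ (fun q : ℝ × EuclideanSpace ℝ (Fin n) => p q.1 q.2) (t, z) (1, 0))
        = ∫ x, fderiv ℝ g (X t x) (v t (X t x)) * p₀ x := by
      have h1 := S1.2
      rw [hAB] at h1
      exact h1.unique S2.2
    -- Step 4 : rewrite the RHS using the weak identity at time t
    have hdg_c : Continuous fun z => fderiv ℝ g z (v t z) :=
      (hg.continuous_fderiv one_ne_zero).clm_apply (hvtc t)
    have hdg_cs : HasCompactSupport fun z => fderiv ℝ g z (v t z) := by
      apply (h2g.fderiv ℝ).mono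
      intro z hz
      simp only [Function.mem_support] at hz ⊢
      intro h0
      apply hz
      rw [h0]
      simp
    have heq2 : (∫ z, fderiv ℝ g z (v t z) * p t z)
        = ∫ x, fderiv ℝ g (X t x) (v t (X t x)) * p₀ x := hweak _ hdg_c hdg_cs t
    -- Step 5 : integration by parts via the divergence lemma
    have hw1 : ContDiff ℝ 1 (fun z => (g z * p t z) • v t z) := (hg.mul (hpt1 t)).smul (hvt1 t)
    have hw2 : HasCompactSupport (fun z => (g z * p t z) • v t z) :=
      HasCompactSupport.smul_right (f := fun z => g z * p t z) (f' := v t)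
        (h2g.mul_right (f' := p t))
    have hdiv0 := integral_divg_eq_zero hw1 hw2
    have hprod : ∀ z, divg (fun z' => (g z' * p t z') • v t z') z
        = fderiv ℝ g z (v t z) * p t z + g z * fderiv ℝ (p t) z (v t z)
          + g z * (p t z * divg (v t) z) := by
      intro z
      rw [divg_smul (fun z => g z * p t z) _ _ ((hg.differentiable one_ne_zero z).mul ((hpt1 t).differentiable one_ne_zero z))
        ((hvt1 t).differentiable one_ne_zero z)]
      rw [fderiv_fun_mul (hg.differentiable one_ne_zero z) ((hpt1 t).differentiable one_ne_zero z)]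
      simp only [ContinuousLinearMap.add_apply, ContinuousLinearMap.smul_apply, smul_eq_mul]
      ring
    rw [show (fun z => divg (fun z' => (g z' * p t z') • v t z') z)
        = fun z => (fderiv ℝ g z (v t z) * p t z + g z * fderiv ℝ (p t) z (v t z)
          + g z * (p t z * divg (v t) z)) from funext hprod] at hdiv0
    have i1 : Integrable (fun z => fderiv ℝ g z (v t z) * p t z) :=
      (hdg_c.mul (hptc t)).integrable_of_hasCompactSupport hdg_cs.mul_right
    have i2 : Integrable (fun z => g z * fderiv ℝ (p t) z (v t z)) :=
      (hgc.mul (hfptc t)).integrable_of_hasCompactSupport h2g.mul_right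
    have i3 : Integrable (fun z => g z * (p t z * divg (v t) z)) :=
      (hgc.mul ((hptc t).mul (hdvc t))).integrable_of_hasCompactSupport h2g.mul_right
    have i12 : Integrable (fun z => fderiv ℝ g z (v t z) * p t z
        + g z * fderiv ℝ (p t) z (v t z)) := i1.add i2
    rw [integral_add i12 i3, integral_add i1 i2] at hdiv0
    have i0 : Integrable (fun z => g z *
        fderiv ℝ (fun q : ℝ × EuclideanSpace ℝ (Fin n) => p q.1 q.2) (t, z) (1, 0)) :=
      (hgc.mul hdptc).integrable_of_hasCompactSupport h2g.mul_right
    calc ∫ z, g z * F z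
        = ∫ z, (g z * fderiv ℝ (fun q : ℝ × EuclideanSpace ℝ (Fin n) => p q.1 q.2) (t, z) (1, 0)
            + g z * fderiv ℝ (p t) z (v t z) + g z * (p t z * divg (v t) z)) := by
          congr 1
          funext z
          simp only [hF]
          ring
      _ = (∫ z, g z *
            fderiv ℝ (fun q : ℝ × EuclideanSpace ℝ (Fin n) => p q.1 q.2) (t, z) (1, 0))
          + (∫ z, g z * fderiv ℝ (p t) z (v t z))
          + ∫ z, g z * (p t z * divg (v t) z) := by
          have i02 : Integrable (fun z => g z *
              fderiv ℝ (fun q : ℝ × EuclideanSpace ℝ (Fin n) => p q.1 q.2) (t, z) (1, 0)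
              + g z * fderiv ℝ (p t) z (v t z)) := i0.add i2
          rw [integral_add i02 i3, integral_add i0 i2]
      _ = 0 := by
          rw [heq1, ← heq2]
          linarith [hdiv0]
  -- localization
  have hzero : F = fun _ => 0 := by
    rw [← Continuous.ae_eq_iff_eq volume hFc continuous_const]
    exact ae_eq_zero_of_integral_contDiff_smul_eq_zero hFc.locallyIntegrable
      (fun g hg h2g => by simpa [smul_eq_mul] using key g (hg.of_le (mod_cast le_top)) h2g)
  have hF0 := congrFun hzero y₀
  have e1 : deriv (fun s => p s y₀) t
      = fderiv ℝ (fun q : ℝ × EuclideanSpace ℝ (Fin n) => p q.1 q.2) (t, y₀) (1, 0) :=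
    (hpd t y₀).deriv
  have e2 : ⟪gradient (p t) y₀, v t y₀⟫ = fderiv ℝ (p t) y₀ (v t y₀) := by
    simp [gradient, InnerProductSpace.toDual_symm_apply]
  rw [e1, e2]
  simpa [hF] using hF0
end

section
/- Let n ≥ 1, let v : ℝ → ℝⁿ → ℝⁿ be bounded and twice continuously differentiable jointly in (t, x), and suppose there exists a flow X of v, continuous in (t, x), such that X(t, ·) : ℝⁿ → ℝⁿ is surjective for every t. If p, q : ℝ → ℝⁿ → ℝ are both continuously differentiable jointly in (t, y), both satisfy the continuity equation ∂u/∂t(t, y) + ∇u_t(y)·v_t(y) + u(t, y)·(∇·v_t)(y) = 0 for all (t, y), and p(0, ·) = q(0, ·), then p = q. -/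
open MeasureTheory
open scoped RealInnerProductSpace

/-- Forward-in-time uniqueness for the linear ODE `g' = a g` with `g 0 = 0`. -/
lemma ode_zero_forward (g a : ℝ → ℝ) (ha : Continuous a)
    (hg : ∀ t, HasDerivAt g (a t * g t) t) (h0 : g 0 = 0) :
    ∀ t, 0 ≤ t → g t = 0 := by
  intro T hT
  have hdiff : Differentiable ℝ g := fun t => (hg t).differentiableAt
  have hcont : Continuous g := hdiff.continuous
  obtain ⟨K, hK⟩ : ∃ K, ∀ s ∈ Set.Icc (0:ℝ) T, |a s| ≤ K := by
    obtain ⟨K, hK⟩ := (isCompact_Icc (a := (0:ℝ)) (b := T)).exists_bound_of_continuousOn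
      ha.continuousOn
    exact ⟨K, hK⟩
  have key := norm_le_gronwallBound_of_norm_deriv_right_le (f := g)
    (f' := fun s => a s * g s) (δ := 0) (K := K) (ε := 0) (a := 0) (b := T)
    hcont.continuousOn
    (fun s _ => (hg s).hasDerivWithinAt)
    (by simp [h0])
    (fun s hs => by
      have h1 : |a s| ≤ K := hK s ⟨hs.1, le_of_lt hs.2⟩
      have h2 : ‖a s * g s‖ = |a s| * ‖g s‖ := abs_mul _ _
      rw [h2, add_zero]
      exact mul_le_mul_of_nonneg_right h1 (norm_nonneg _))
  have h3 := key T ⟨hT, le_refl T⟩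
  rw [gronwallBound_ε0_δ0] at h3
  have h4 := le_antisymm h3 (norm_nonneg _)
  simpa using h4

/-- Uniqueness for the linear ODE `g' = a g` with `g 0 = 0`, all times. -/
lemma ode_zero (g a : ℝ → ℝ) (ha : Continuous a)
    (hg : ∀ t, HasDerivAt g (a t * g t) t) (h0 : g 0 = 0) : ∀ t, g t = 0 := by
  intro t
  rcases le_total 0 t with h | h
  · exact ode_zero_forward g a ha hg h0 t h
  · have hneg : ∀ s, HasDerivAt (fun s => g (-s)) ((-a (-s)) * g (-s)) s := by
      intro s
      have := (hg (-s)).comp s (hasDerivAt_neg s)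
      simpa [Function.comp_def, mul_comm, mul_assoc, mul_left_comm] using this
    have := ode_zero_forward (fun s => g (-s)) (fun s => -a (-s))
      (ha.comp continuous_neg).neg hneg (by simpa using h0) (-t) (by linarith)
    simpa using this

/-- Along the flow, a solution of the continuity equation satisfies a linear ODE. -/
lemma pde_along_flow {n : ℕ}
    (v : ℝ → EuclideanSpace ℝ (Fin n) → EuclideanSpace ℝ (Fin n))
    (F : ℝ → EuclideanSpace ℝ (Fin n) → ℝ)
    (hF : ContDiff ℝ 1 (fun z : ℝ × EuclideanSpace ℝ (Fin n) => F z.1 z.2))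
    (hEq : ∀ (t : ℝ) (y : EuclideanSpace ℝ (Fin n)),
      deriv (fun s => F s y) t + ⟪gradient (F t) y, v t y⟫ + F t y * divg (v t) y = 0)
    (X : ℝ → EuclideanSpace ℝ (Fin n) → EuclideanSpace ℝ (Fin n))
    (hXd : ∀ t x, HasDerivAt (fun s => X s x) (v t (X t x)) t)
    (t : ℝ) (x : EuclideanSpace ℝ (Fin n)) :
    HasDerivAt (fun s => F s (X s x))
      ((-(divg (v t) (X t x))) * F t (X t x)) t := by
  have hFd : HasFDerivAt (fun z : ℝ × EuclideanSpace ℝ (Fin n) => F z.1 z.2)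
      (fderiv ℝ (fun z : ℝ × EuclideanSpace ℝ (Fin n) => F z.1 z.2) (t, X t x)) (t, X t x) :=
    (hF.differentiable one_ne_zero (t, X t x)).hasFDerivAt
  set D := fderiv ℝ (fun z : ℝ × EuclideanSpace ℝ (Fin n) => F z.1 z.2) (t, X t x) with hD
  -- derivative along the flow
  have hc : HasDerivAt (fun s => ((s, X s x) : ℝ × EuclideanSpace ℝ (Fin n)))
      ((1 : ℝ), v t (X t x)) t :=
    (hasDerivAt_id t).prodMk (hXd t x)
  have h1 : HasDerivAt (fun s => F s (X s x)) (D (1, v t (X t x))) t :=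
    by have := hFd.comp_hasDerivAt t hc; exact this
  -- time partial derivative
  have hct : HasDerivAt (fun s => ((s, X t x) : ℝ × EuclideanSpace ℝ (Fin n)))
      ((1 : ℝ), (0 : EuclideanSpace ℝ (Fin n))) t :=
    (hasDerivAt_id t).prodMk (hasDerivAt_const t (X t x))
  have ht : HasDerivAt (fun s => F s (X t x)) (D (1, 0)) t :=
    by have := hFd.comp_hasDerivAt t hct; exact this
  -- space partial derivative
  set L : EuclideanSpace ℝ (Fin n) →L[ℝ] ℝ × EuclideanSpace ℝ (Fin n) :=
    (0 : EuclideanSpace ℝ (Fin n) →L[ℝ] ℝ).prod (ContinuousLinearMap.id ℝ _) with hL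
  have hcy : HasFDerivAt
      (fun y' : EuclideanSpace ℝ (Fin n) => ((t, y') : ℝ × EuclideanSpace ℝ (Fin n)))
      L (X t x) :=
    (hasFDerivAt_const t (X t x)).prodMk (hasFDerivAt_id (X t x))
  have hyd : HasFDerivAt (F t) (D.comp L) (X t x) := hFd.comp (X t x) hcy
  have hgrad : ⟪gradient (F t) (X t x), v t (X t x)⟫ = D (0, v t (X t x)) := by
    have hfd : fderiv ℝ (F t) (X t x) = D.comp L := hyd.fderiv
    rw [gradient, InnerProductSpace.toDual_symm_apply, hfd]
    rfl
  have hEq' := hEq t (X t x)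
  rw [ht.deriv, hgrad] at hEq'
  have hsum : D (1, v t (X t x)) = D (1, 0) + D (0, v t (X t x)) := by
    have h5 : ((1 : ℝ), v t (X t x)) =
        ((1 : ℝ), (0 : EuclideanSpace ℝ (Fin n))) + ((0 : ℝ), v t (X t x)) := by simp
    rw [h5, map_add]
  have hval : D (1, v t (X t x)) = (-(divg (v t) (X t x))) * F t (X t x) := by
    rw [hsum]; linarith [hEq']
  rw [← hval]
  exact h1

theorem continuity_equation_uniqueness
    (n : ℕ) (hn : 1 ≤ n)
    (v : ℝ → EuclideanSpace ℝ (Fin n) → EuclideanSpace ℝ (Fin n))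
    (hv_bdd : ∃ C : ℝ, ∀ t x, ‖v t x‖ ≤ C)
    (hv_smooth : ContDiff ℝ 2 (fun q : ℝ × EuclideanSpace ℝ (Fin n) => v q.1 q.2))
    (hX : ∃ X : ℝ → EuclideanSpace ℝ (Fin n) → EuclideanSpace ℝ (Fin n),
      (∀ x, X 0 x = x) ∧
      (∀ t x, HasDerivAt (fun s => X s x) (v t (X t x)) t) ∧
      Continuous (fun q : ℝ × EuclideanSpace ℝ (Fin n) => X q.1 q.2) ∧
      (∀ t, Function.Surjective (X t)))
    (p q : ℝ → EuclideanSpace ℝ (Fin n) → ℝ)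
    (hp_smooth : ContDiff ℝ 1 (fun z : ℝ × EuclideanSpace ℝ (Fin n) => p z.1 z.2))
    (hq_smooth : ContDiff ℝ 1 (fun z : ℝ × EuclideanSpace ℝ (Fin n) => q z.1 z.2))
    (hp_eq : ∀ (t : ℝ) (y : EuclideanSpace ℝ (Fin n)),
      deriv (fun s => p s y) t + ⟪gradient (p t) y, v t y⟫ + p t y * divg (v t) y = 0)
    (hq_eq : ∀ (t : ℝ) (y : EuclideanSpace ℝ (Fin n)),
      deriv (fun s => q s y) t + ⟪gradient (q t) y, v t y⟫ + q t y * divg (v t) y = 0)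
    (h0 : p 0 = q 0) :
    p = q := by
  obtain ⟨X, hX0, hXd, hXc, hXs⟩ := hX
  -- continuity of the divergence in both variables
  have hDc : Continuous (fun z : ℝ × EuclideanSpace ℝ (Fin n) => fderiv ℝ (v z.1) z.2) := by
    have huncurry : ContDiff ℝ 2
        (Function.uncurry (fun (z : ℝ × EuclideanSpace ℝ (Fin n))
          (y : EuclideanSpace ℝ (Fin n)) => v z.1 y)) := by
      have heq : (Function.uncurry (fun (z : ℝ × EuclideanSpace ℝ (Fin n))
          (y : EuclideanSpace ℝ (Fin n)) => v z.1 y)) =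
          (fun q : ℝ × EuclideanSpace ℝ (Fin n) => v q.1 q.2) ∘
            (fun w : (ℝ × EuclideanSpace ℝ (Fin n)) × EuclideanSpace ℝ (Fin n) =>
              (w.1.1, w.2)) := rfl
      rw [heq]
      exact hv_smooth.comp ((contDiff_fst.fst).prodMk contDiff_snd)
    have h6 := ContDiff.fderiv (𝕜 := ℝ) (m := 2) (n := 1)
      (f := fun (z : ℝ × EuclideanSpace ℝ (Fin n)) (y : EuclideanSpace ℝ (Fin n)) => v z.1 y)
      (g := Prod.snd) huncurry contDiff_snd (by norm_num)
    exact h6.continuous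
  have hTr : Continuous (fun T : EuclideanSpace ℝ (Fin n) →L[ℝ] EuclideanSpace ℝ (Fin n) =>
      LinearMap.trace ℝ (EuclideanSpace ℝ (Fin n)) (ContinuousLinearMap.toLinearMap T)) := by
    have hlin : IsLinearMap ℝ
        (fun T : EuclideanSpace ℝ (Fin n) →L[ℝ] EuclideanSpace ℝ (Fin n) =>
          LinearMap.trace ℝ (EuclideanSpace ℝ (Fin n)) (ContinuousLinearMap.toLinearMap T)) := by
      constructor <;> intros <;> simp
    exact (IsLinearMap.mk' _ hlin).continuous_of_finiteDimensional
  have hA : Continuous (fun z : ℝ × EuclideanSpace ℝ (Fin n) => divg (v z.1) z.2) :=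
    hTr.comp hDc
  -- main argument
  funext t y
  obtain ⟨x, rfl⟩ := hXs t y
  set g : ℝ → ℝ := fun s => p s (X s x) - q s (X s x) with hgdef
  set a : ℝ → ℝ := fun s => -(divg (v s) (X s x)) with hadef
  have ha : Continuous a := by
    have hx : Continuous (fun s : ℝ => ((s, X s x) : ℝ × EuclideanSpace ℝ (Fin n))) :=
      continuous_id.prodMk (hXc.comp (continuous_id.prodMk continuous_const))
    exact (hA.comp hx).neg
  have hg : ∀ s, HasDerivAt g (a s * g s) s := by
    intro s
    have hp' := pde_along_flow v p hp_smooth hp_eq X hXd s x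
    have hq' := pde_along_flow v q hq_smooth hq_eq X hXd s x
    have := hp'.sub hq'
    simpa [hgdef, hadef, mul_sub, Pi.sub_def] using this
  have h00 : g 0 = 0 := by simp [hgdef, hX0, h0]
  have hgt := ode_zero g a ha hg h00 t
  have hfin : p t (X t x) - q t (X t x) = 0 := hgt
  linarith
end
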